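/- A solvable group G is polycyclic if and only if every subgroup of G is finitely generated. -/

import Mathlib

def IsPolycyclic (G : Type*) [Group G] : Prop :=
  ∃ (n : ℕ) (N : ℕ → Subgroup G), N 0 = ⊤ ∧ N (n + 1) = ⊥ ∧
    ∀ i ≤ n, N (i + 1) ≤ N i ∧
      (∀ x ∈ N i, ∀ y ∈ N (i + 1), x * y * x⁻¹ ∈ N (i + 1)) ∧
      ∃ g ∈ N i, ∀ x ∈ N i, ∃ m : ℤ, x * (g ^ m)⁻¹ ∈ N (i + 1)

section Aux

variable {G : Type*} [Group G]

open Subgroup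

set_option maxHeartbeats 1000000 in
/-- Forward step: if `H ⊓ B` is f.g. and `A/B` is "cyclic", then `H ⊓ A` is f.g. -/
lemma fg_inf_step (H A B : Subgroup G) (hBA : B ≤ A)
    (hconj : ∀ x ∈ A, ∀ y ∈ B, x * y * x⁻¹ ∈ B)
    (g : G) (hg : g ∈ A) (hcyc : ∀ x ∈ A, ∃ m : ℤ, x * (g ^ m)⁻¹ ∈ B)
    (hfg : (H ⊓ B).FG) : (H ⊓ A).FG := by
  classical
  -- the set of exponents m realized by elements of H ⊓ A
  let M : AddSubgroup ℤ :=
    { carrier := {m | ∃ x, x ∈ H ⊓ A ∧ x * (g ^ m)⁻¹ ∈ B}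
      zero_mem' := ⟨1, one_mem _, by simpa using B.one_mem⟩
      add_mem' := by
        rintro m m' ⟨x, hx, hxB⟩ ⟨x', hx', hxB'⟩
        refine ⟨x * x', mul_mem hx hx', ?_⟩
        have h2 : g ^ m * (x' * (g ^ m')⁻¹) * (g ^ m)⁻¹ ∈ B :=
          hconj _ (A.zpow_mem hg m) _ hxB'
        have := B.mul_mem hxB h2
        have e : (x * (g ^ m)⁻¹) * (g ^ m * (x' * (g ^ m')⁻¹) * (g ^ m)⁻¹)
            = x * x' * (g ^ (m + m'))⁻¹ := by group
        rwa [e] at this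
      neg_mem' := by
        rintro m ⟨x, hx, hxB⟩
        refine ⟨x⁻¹, inv_mem hx, ?_⟩
        have h2 : x⁻¹ * (x * (g ^ m)⁻¹)⁻¹ * (x⁻¹)⁻¹ ∈ B :=
          hconj _ (inv_mem hx.2) _ (B.inv_mem hxB)
        have e : x⁻¹ * (x * (g ^ m)⁻¹)⁻¹ * (x⁻¹)⁻¹ = x⁻¹ * (g ^ (-m))⁻¹ := by group
        rwa [e] at h2 }
  obtain ⟨c, hc⟩ := Int.subgroup_cyclic M
  have hcM : c ∈ M := by rw [hc]; exact AddSubgroup.subset_closure rfl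
  obtain ⟨x₀, hx₀HA, hx₀B⟩ := hcM
  -- powers of x₀ realize multiples of c
  have hpow : ∀ k : ℤ, x₀ ^ k * (g ^ (c * k))⁻¹ ∈ B := by
    intro k
    induction k using Int.induction_on with
    | zero => simpa using B.one_mem
    | succ k ih =>
      have h2 : g ^ c * (x₀ ^ (k : ℤ) * (g ^ (c * k))⁻¹) * (g ^ c)⁻¹ ∈ B :=
        hconj _ (A.zpow_mem hg c) _ ih
      have := B.mul_mem hx₀B h2
      have e : (x₀ * (g ^ c)⁻¹) * (g ^ c * (x₀ ^ (k : ℤ) * (g ^ (c * k))⁻¹) * (g ^ c)⁻¹)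
          = x₀ ^ ((k : ℤ) + 1) * (g ^ (c * ((k : ℤ) + 1)))⁻¹ := by group
      rwa [e] at this
    | pred k ih =>
      have h2 : (g ^ c)⁻¹ * ((x₀ * (g ^ c)⁻¹)⁻¹ * (x₀ ^ (-(k : ℤ)) * (g ^ (c * (-(k : ℤ))))⁻¹))
          * ((g ^ c)⁻¹)⁻¹ ∈ B :=
        hconj _ (inv_mem (A.zpow_mem hg c)) _ (B.mul_mem (B.inv_mem hx₀B) ih)
      have e : (g ^ c)⁻¹ * ((x₀ * (g ^ c)⁻¹)⁻¹ * (x₀ ^ (-(k : ℤ)) * (g ^ (c * (-(k : ℤ))))⁻¹))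
          * ((g ^ c)⁻¹)⁻¹ = x₀ ^ (-(k : ℤ) - 1) * (g ^ (c * (-(k : ℤ) - 1)))⁻¹ := by group
      rwa [e] at h2
  obtain ⟨S, hS⟩ := hfg
  refine ⟨insert x₀ S, le_antisymm ?_ ?_⟩
  · rw [closure_le]
    intro y hy
    rcases Finset.mem_insert.mp (by exact_mod_cast hy) with h | h
    · exact h ▸ hx₀HA
    · have : y ∈ H ⊓ B := hS ▸ subset_closure (by exact_mod_cast h)
      exact le_inf inf_le_left (inf_le_right.trans hBA) this
  · intro x hx
    obtain ⟨m, hm⟩ := hcyc x hx.2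
    have hmM : m ∈ M := ⟨x, hx, hm⟩
    rw [hc, AddSubgroup.mem_closure_singleton] at hmM
    obtain ⟨k, hk⟩ := hmM
    have hmeq : m = c * k := by rw [← hk]; simp [mul_comm]
    have hxB : x * (x₀ ^ k)⁻¹ ∈ H ⊓ B := by
      constructor
      · exact mul_mem hx.1 (H.inv_mem (H.zpow_mem hx₀HA.1 k))
      · have := B.mul_mem hm (B.inv_mem (hpow k))
        have e : (x * (g ^ m)⁻¹) * (x₀ ^ k * (g ^ (c * k))⁻¹)⁻¹
            = x * (x₀ ^ k)⁻¹ := by rw [hmeq]; group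
        rwa [e] at this
    have h1 : x * (x₀ ^ k)⁻¹ ∈ closure (↑(insert x₀ S) : Set G) := by
      have : x * (x₀ ^ k)⁻¹ ∈ closure (↑S : Set G) := by rw [hS]; exact hxB
      exact closure_mono (by intro a ha; exact_mod_cast Finset.mem_insert_of_mem (by exact_mod_cast ha)) this
    have h2 : x₀ ^ k ∈ closure (↑(insert x₀ S) : Set G) :=
      Subgroup.zpow_mem _ (subset_closure (by exact_mod_cast Finset.mem_insert_self x₀ S)) k
    have := mul_mem h1 h2
    simpa using this

/-- There is a "polycyclic series" from `⊤` down to `A`. -/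
def SeriesTo {G : Type*} [Group G] (A : Subgroup G) : Prop :=
  ∃ (n : ℕ) (N : ℕ → Subgroup G), N 0 = ⊤ ∧ N (n + 1) = A ∧
    ∀ i ≤ n, N (i + 1) ≤ N i ∧
      (∀ x ∈ N i, ∀ y ∈ N (i + 1), x * y * x⁻¹ ∈ N (i + 1)) ∧
      ∃ g ∈ N i, ∀ x ∈ N i, ∃ m : ℤ, x * (g ^ m)⁻¹ ∈ N (i + 1)

lemma seriesTo_top : SeriesTo (⊤ : Subgroup G) := by
  refine ⟨0, fun _ => ⊤, rfl, rfl, ?_⟩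
  intro i _
  exact ⟨le_rfl, fun _ _ _ _ => mem_top _, 1, mem_top _, fun x _ => ⟨0, mem_top _⟩⟩

lemma seriesTo_step {A B : Subgroup G} (h : SeriesTo A) (hBA : B ≤ A)
    (hconj : ∀ x ∈ A, ∀ y ∈ B, x * y * x⁻¹ ∈ B)
    (hcyc : ∃ g ∈ A, ∀ x ∈ A, ∃ m : ℤ, x * (g ^ m)⁻¹ ∈ B) : SeriesTo B := by
  obtain ⟨n, N, h0, h1, hstep⟩ := h
  refine ⟨n + 1, fun j => if j ≤ n + 1 then N j else B, by simp [h0], by simp, ?_⟩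
  intro i hi
  rcases Nat.lt_or_ge i (n + 1) with hlt | hge
  · have hi' : i ≤ n := Nat.lt_succ_iff.mp hlt
    have e1 : (if i ≤ n + 1 then N i else B) = N i := if_pos (by omega)
    have e2 : (if i + 1 ≤ n + 1 then N (i + 1) else B) = N (i + 1) := if_pos (by omega)
    simp only [e1, e2]
    exact hstep i hi'
  · have hie : i = n + 1 := le_antisymm hi hge
    subst hie
    have e1 : (if n + 1 ≤ n + 1 then N (n + 1) else B) = A := by rw [if_pos le_rfl, h1]
    have e2 : (if n + 1 + 1 ≤ n + 1 then N (n + 1 + 1) else B) = B := if_neg (by omega)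
    simp only [e1, e2]
    exact ⟨hBA, hconj, hcyc⟩

set_option maxHeartbeats 1000000 in
lemma seriesTo_of_list (L : List G) : ∀ (A A' : Subgroup G),
    (∀ a ∈ A, ∀ b ∈ A, a * b * a⁻¹ * b⁻¹ ∈ A') →
    A = A' ⊔ Subgroup.closure {x | x ∈ L} → SeriesTo A → SeriesTo A' := by
  induction L with
  | nil =>
    intro A A' _ hA hS
    have : A = A' := by
      rw [hA]
      have : ({x | x ∈ ([] : List G)} : Set G) = ∅ := by ext x; simp
      rw [this, Subgroup.closure_empty, sup_bot_eq]
    exact this ▸ hS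
  | cons g L ih =>
    intro A A' hcomm hA hS
    set C : Subgroup G := A' ⊔ closure {x | x ∈ L} with hC
    have hA2 : A = C ⊔ closure {g} := by
      rw [hA, hC]
      have e : ({x | x ∈ g :: L} : Set G) = {g} ∪ {x | x ∈ L} := by ext x; simp
      rw [e, Subgroup.closure_union]
      rw [sup_comm (closure {g}) (closure {x | x ∈ L}), ← sup_assoc]
    have hCA : C ≤ A := by rw [hA2]; exact le_sup_left
    have hgA : g ∈ A := by rw [hA2]; exact SetLike.le_def.mp le_sup_right (subset_closure (Set.mem_singleton g))
    have hA'C : A' ≤ C := le_sup_left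
    have hnorm : ∀ x ∈ A, ∀ y ∈ C, x * y * x⁻¹ ∈ C := by
      intro x hx y hy
      have h1 : x * y * x⁻¹ * y⁻¹ ∈ C := hA'C (hcomm x hx y (hCA hy))
      have := C.mul_mem h1 hy
      rwa [inv_mul_cancel_right] at this
    have hAcl : closure ((C : Set G) ∪ {g}) = A := by
      rw [Subgroup.closure_union, closure_eq, ← hA2]
    have hcyc : ∀ x ∈ A, ∃ m : ℤ, x * (g ^ m)⁻¹ ∈ C := by
      intro x hx
      rw [← hAcl] at hx
      induction hx using closure_induction with
      | mem y hy =>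
        rcases hy with hy | hy
        · exact ⟨0, by simpa using hy⟩
        · refine ⟨1, ?_⟩
          simp only [Set.mem_singleton_iff] at hy
          subst hy
          simpa using C.one_mem
      | one => exact ⟨0, by simpa using C.one_mem⟩
      | mul y z hy hz py pz =>
        obtain ⟨m, hm⟩ := py
        obtain ⟨m', hm'⟩ := pz
        refine ⟨m + m', ?_⟩
        have h2 : g ^ m * (z * (g ^ m')⁻¹) * (g ^ m)⁻¹ ∈ C :=
          hnorm _ (A.zpow_mem hgA m) _ hm'
        have := C.mul_mem hm h2
        have e : (y * (g ^ m)⁻¹) * (g ^ m * (z * (g ^ m')⁻¹) * (g ^ m)⁻¹)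
            = y * z * (g ^ (m + m'))⁻¹ := by group
        rwa [e] at this
      | inv y hy py =>
        obtain ⟨m, hm⟩ := py
        refine ⟨-m, ?_⟩
        have hyA : y ∈ A := hAcl ▸ hy
        have h2 : y⁻¹ * (y * (g ^ m)⁻¹)⁻¹ * (y⁻¹)⁻¹ ∈ C :=
          hnorm _ (A.inv_mem hyA) _ (C.inv_mem hm)
        have e : y⁻¹ * (y * (g ^ m)⁻¹)⁻¹ * (y⁻¹)⁻¹ = y⁻¹ * (g ^ (-m))⁻¹ := by group
        rwa [e] at h2
    have hSC : SeriesTo C := seriesTo_step hS hCA hnorm ⟨g, hgA, hcyc⟩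
    exact ih C A' (fun a ha b hb => hcomm a (hCA ha) b (hCA hb)) rfl hSC

end Aux

/-- A solvable group is polycyclic iff every subgroup is finitely generated. -/
theorem solvable_polycyclic_iff_subgroups_fg
    (G : Type*) [Group G] (hs : IsSolvable G) :
    IsPolycyclic G ↔ ∀ H : Subgroup G, H.FG := by
  constructor
  · rintro ⟨n, N, htop, hbot, hstep⟩ H
    have key : ∀ k i, i + k = n + 1 → (H ⊓ N i).FG := by
      intro k
      induction k with
      | zero =>
        intro i hi
        have : i = n + 1 := by omega
        subst this
        rw [hbot, inf_bot_eq]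
        exact ⟨∅, by simp⟩
      | succ k ihk =>
        intro i hi
        have hin : i ≤ n := by omega
        obtain ⟨hle, hconj, g, hg, hcyc⟩ := hstep i hin
        exact fg_inf_step H (N i) (N (i + 1)) hle hconj g hg hcyc (ihk (i + 1) (by omega))
    have := key (n + 1) 0 (by omega)
    rwa [htop, inf_top_eq] at this
  · intro hfg
    obtain ⟨k, hk⟩ := hs.solvable
    have main : ∀ i, SeriesTo (derivedSeries G i) := by
      intro i
      induction i with
      | zero => rw [derivedSeries_zero]; exact seriesTo_top
      | succ i ihi =>
        obtain ⟨S, hSgen⟩ := hfg (derivedSeries G i)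
        refine seriesTo_of_list S.toList (derivedSeries G i) (derivedSeries G (i + 1))
          ?_ ?_ ihi
        · intro a ha b hb
          rw [derivedSeries_succ]
          exact Subgroup.commutator_mem_commutator ha hb
        · have e : ({x | x ∈ S.toList} : Set G) = (↑S : Set G) := by ext x; simp
          rw [e, hSgen]
          have hle : derivedSeries G (i + 1) ≤ derivedSeries G i := by
            rw [derivedSeries_succ]
            exact @Subgroup.commutator_le_left G _ _ _ (derivedSeries_normal G i)
          exact (sup_eq_right.mpr hle).symm
    have := main k
    rw [hk] at this
    exact this
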